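/- (Remark 1, second claim) If C_P > (1 − α)·L·(β_U − γ) (Assumption 2), then for every μ_S ∈ [0,1] one has y*_INT ≥ 1 − γ/(β_P(α + (1 − α)μ_S)); in particular the necessary condition z_S^†(μ_S) ∈ (0,1) for the interior-protection stationary Nash equilibrium of Theorem 1 case 2 fails for all μ_S. -/
import Mathlib


/-- Effective infection rate β_eff(z_S, z_I, μ_S). -/
noncomputable def betaEff (a bP bU zS zI m : ℝ) : ℝ :=
  (bP + (bU - bP) * zI) * (a + (1 - a) * (zS * m + zI * (1 - m)))

/-- Endemic infection level y_EE(z_S, z_I, μ_S). -/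
noncomputable def yEE (a gam bP bU zS zI m : ℝ) : ℝ :=
  1 - gam / betaEff a bP bU zS zI m

/-- The function h(z_I, μ_S). -/
noncomputable def hFun (a gam bP bU L CP zI m : ℝ) : ℝ :=
  (1 - a) * L * (bP + (bU - bP) * zI) * yEE a gam bP bU 1 zI m - CP

/-- The function g(z_I, μ_S). -/
noncomputable def gFun (a gam bP bU L CP CU zI m : ℝ) : ℝ :=
  yEE a gam bP bU 1 zI m * (CU - CP)
    - (1 - m) * (1 - yEE a gam bP bU 1 zI m) * (-(hFun a gam bP bU L CP zI m))

/-- Expected-utility difference ΔU[S̄]. -/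
noncomputable def dUS (a bP bU L CP y zI : ℝ) : ℝ :=
  (1 - a) * L * (bP + (bU - bP) * zI) * y - CP

/-- Expected-utility difference ΔU[Ī]. -/
noncomputable def dUI (a bP bU L CP CU m y zI : ℝ) : ℝ :=
  ((1 - m) * (1 - y) / (y + (1 - m) * (1 - y))) *
    ((1 - a) * L * (bP + (bU - bP) * zI) * y - CU) + CU - CP

/-- Stationary Nash equilibrium for signal μ_S = m. -/
def IsSNE (a gam bP bU L CP CU m y zS zI : ℝ) : Prop :=
  y ∈ Set.Ioo (0:ℝ) 1 ∧ zS ∈ Set.Icc (0:ℝ) 1 ∧ zI ∈ Set.Icc (0:ℝ) 1 ∧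
  gam < betaEff a bP bU zS zI m ∧
  y = yEE a gam bP bU zS zI m ∧
  (0 < dUS a bP bU L CP y zI → zS = 0) ∧
  (dUS a bP bU L CP y zI < 0 → zS = 1) ∧
  (0 < dUI a bP bU L CP CU m y zI → zI = 0) ∧
  (dUI a bP bU L CP CU m y zI < 0 → zI = 1)

/-- Characterization of μ_S^max. -/
def IsMuMax (a gam bP bU L CP CU mmax : ℝ) : Prop :=
  (0 ≤ gFun a gam bP bU L CP CU 0 0 ∧ mmax = 0) ∨
  (gFun a gam bP bU L CP CU 0 0 < 0 ∧ mmax ∈ Set.Ioo (0:ℝ) 1 ∧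
    gFun a gam bP bU L CP CU 0 mmax = 0)

/-- The threshold μ_S^min. -/
noncomputable def muMin (a gam bU L CP CU : ℝ) : ℝ :=
  1 - (bU - gam) * (CU - CP) / (gam * (CP - (1 - a) * L * (bU - gam)))

theorem stmt8
    (a gam bP bU L CP CU : ℝ)
    (ha : a ∈ Set.Ioo (0:ℝ) 1) (hgam : gam ∈ Set.Ioo (0:ℝ) 1)
    (hbP : 0 < bP) (hbPU : bP < bU) (hbU1 : bU < 1)
    (hL : 0 < L) (hCP : 0 < CP) (hCPU : CP < CU)
    (hA1 : gam < a * bP)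
    (hA2 : (1 - a) * L * (bU - gam) < CP) :
    ∀ m ∈ Set.Icc (0:ℝ) 1,
      1 - gam / (bP * (a + (1 - a) * m)) ≤ CP / (L * (1 - a) * bP) ∧
      ¬(1 - gam / (a * bP) < CP / (L * (1 - a) * bP) ∧
          CP / (L * (1 - a) * bP) < 1 - gam / (bP * (a + (1 - a) * m))) := by
  obtain ⟨ha0, ha1⟩ := ha
  obtain ⟨hg0, hg1⟩ := hgam
  intro m hm
  obtain ⟨hm0, hm1⟩ := hm
  have h1a : (0:ℝ) < 1 - a := by linarith
  have hd : 0 < a + (1 - a) * m := by nlinarith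
  have hd1 : a + (1 - a) * m ≤ 1 := by nlinarith
  have hD : 0 < bP * (a + (1 - a) * m) := mul_pos hbP hd
  have hE : 0 < L * (1 - a) * bP := by positivity
  have hCPb : (1 - a) * L * (bP - gam) < CP := by nlinarith
  have key : 1 - gam / (bP * (a + (1 - a) * m)) ≤ CP / (L * (1 - a) * bP) := by
    have h1 : 1 - gam / (bP * (a + (1 - a) * m))
        = (bP * (a + (1 - a) * m) - gam) / (bP * (a + (1 - a) * m)) := by
      field_simp
    rw [h1, div_le_div_iff₀ hD hE]
    nlinarith [mul_nonneg (sub_nonneg.mpr (mul_le_of_le_one_right hbP.le hd1))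
        (mul_pos (mul_pos hg0 hL) h1a).le,
      mul_pos hD (sub_pos.mpr hCPb)]
  exact ⟨key, fun ⟨_, h2⟩ => absurd key (not_le.mpr h2)⟩
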